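/- Let E be a finite-dimensional real vector space, C a nonzero cone of E, and u a linear endomorphism of E such that u(C \ {0}) ⊆ C \ {0}. Then u^∞(C) := ⋂ₙ≥₀ uⁿ(C) is a nonzero cone of E, and u(u^∞(C)) = u^∞(C). -/
import Mathlib


/-- A *cone* in a real topological vector space: a closed subset containing `0`,
stable under addition and under multiplication by positive scalars. -/
def IsCone {E : Type*} [NormedAddCommGroup E] [NormedSpace ℝ E] (C : Set E) : Prop :=
  IsClosed C ∧ (0 : E) ∈ C ∧ (∀ x ∈ C, ∀ y ∈ C, x + y ∈ C) ∧
    ∀ t : ℝ, 0 < t → ∀ x ∈ C, t • x ∈ C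

/-- If `C` is a nonzero cone of a finite-dimensional real vector space and `u` maps
`C \ {0}` into itself, then `u^∞(C) = ⋂ n, uⁿ(C)` is a nonzero cone, and
`u(u^∞(C)) = u^∞(C)`. -/
theorem infinite_intersection_cone {E : Type*} [NormedAddCommGroup E] [NormedSpace ℝ E]
    [FiniteDimensional ℝ E] (C : Set E) (hC : IsCone C)
    (hnonzero : ∃ x ∈ C, x ≠ 0) (u : Module.End ℝ E)
    (hu : ∀ x ∈ C, x ≠ 0 → u x ∈ C ∧ u x ≠ 0) :
    IsCone (⋂ n : ℕ, (u ^ n) '' C) ∧ (∃ x ∈ ⋂ n : ℕ, (u ^ n) '' C, x ≠ 0) ∧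
      u '' (⋂ n : ℕ, (u ^ n) '' C) = ⋂ n : ℕ, (u ^ n) '' C := by
  obtain ⟨hCclosed, hC0, hCadd, hCsmul⟩ := hC
  obtain ⟨x₀, hx₀C, hx₀⟩ := hnonzero
  have hucont : Continuous u := u.continuous_of_finiteDimensional
  have huC : ∀ x ∈ C, u x ∈ C := by
    intro x hx
    rcases eq_or_ne x 0 with rfl | hne
    · simpa using hC0
    · exact (hu x hx hne).1
  -- Step 1: a uniform lower bound ‖u y‖ ≥ δ ‖y‖ on C.
  obtain ⟨δ, hδpos, hδle⟩ : ∃ δ : ℝ, 0 < δ ∧ ∀ y ∈ C, δ * ‖y‖ ≤ ‖u y‖ := by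
    set K : Set E := C ∩ Metric.sphere 0 1 with hKdef
    have hKc : IsCompact K := (isCompact_sphere 0 1).inter_left hCclosed
    have hx₀norm : ‖x₀‖ ≠ 0 := norm_ne_zero_iff.mpr hx₀
    have hKne : K.Nonempty := by
      refine ⟨‖x₀‖⁻¹ • x₀, hCsmul _ (by positivity) _ hx₀C, ?_⟩
      simp [norm_smul, inv_mul_cancel₀ hx₀norm]
    obtain ⟨y₀, hy₀K, hy₀min⟩ := hKc.exists_isMinOn hKne
      ((continuous_norm.comp hucont).continuousOn (s := K))
    have hy₀ne : y₀ ≠ 0 := by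
      have h1 : ‖y₀‖ = 1 := by simpa using hy₀K.2
      intro h; rw [h] at h1; simp at h1
    refine ⟨‖u y₀‖, ?_, ?_⟩
    · exact norm_pos_iff.mpr (hu y₀ hy₀K.1 hy₀ne).2
    · intro y hy
      rcases eq_or_ne y 0 with rfl | hyne
      · simp
      · have hynorm : ‖y‖ ≠ 0 := norm_ne_zero_iff.mpr hyne
        have hs : ‖y‖⁻¹ • y ∈ K :=
          ⟨hCsmul _ (by positivity) _ hy, by simp [norm_smul, inv_mul_cancel₀ hynorm]⟩
        have hmin : ‖u y₀‖ ≤ ‖u (‖y‖⁻¹ • y)‖ := hy₀min hs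
        rw [map_smul, norm_smul, norm_inv, norm_norm] at hmin
        -- hmin : ‖u y₀‖ ≤ ‖y‖⁻¹ * ‖u y‖
        have hypos : 0 < ‖y‖ := by positivity
        calc ‖u y₀‖ * ‖y‖ ≤ (‖y‖⁻¹ * ‖u y‖) * ‖y‖ := by
              exact mul_le_mul_of_nonneg_right hmin (le_of_lt hypos)
          _ = ‖u y‖ := by field_simp
  -- Step 2: iterates stay in C with the norm lower bound.
  have hiter : ∀ n : ℕ, ∀ x ∈ C, (u ^ n) x ∈ C ∧ δ ^ n * ‖x‖ ≤ ‖(u ^ n) x‖ := by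
    intro n
    induction n with
    | zero => intro x hx; simpa using hx
    | succ n ih =>
      intro x hx
      have huxC : u x ∈ C := huC x hx
      obtain ⟨h1, h2⟩ := ih (u x) huxC
      have happ : (u ^ (n + 1)) x = (u ^ n) (u x) := by
        rw [pow_succ]; rfl
      refine ⟨by rw [happ]; exact h1, ?_⟩
      rw [happ]
      calc δ ^ (n + 1) * ‖x‖ = δ ^ n * (δ * ‖x‖) := by ring
        _ ≤ δ ^ n * ‖u x‖ :=
            mul_le_mul_of_nonneg_left (hδle x hx) (le_of_lt (pow_pos hδpos n))
        _ ≤ ‖(u ^ n) (u x)‖ := h2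
  have hsubC : ∀ n : ℕ, (u ^ n) '' C ⊆ C := by
    rintro n _ ⟨a, ha, rfl⟩; exact (hiter n a ha).1
  have hmono : ∀ n : ℕ, (u ^ (n + 1)) '' C ⊆ (u ^ n) '' C := by
    rintro n _ ⟨a, ha, rfl⟩
    exact ⟨u a, huC a ha, by rw [pow_succ]; rfl⟩
  -- Step 3: each image uⁿ(C) is closed.
  have hne0 : ∀ n : ℕ, ∀ x ∈ C, x ≠ 0 → (u ^ n) x ≠ 0 := by
    intro n x hx hxne
    have h := (hiter n x hx).2
    have : 0 < δ ^ n * ‖x‖ := by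
      have := norm_pos_iff.mpr hxne
      positivity
    intro h0
    rw [h0, norm_zero] at h
    linarith
  have hclosed : ∀ n : ℕ, IsClosed ((u ^ n) '' C) := by
    intro n
    have hcont : Continuous (u ^ n) := (u ^ n).continuous_of_finiteDimensional
    rw [← isSeqClosed_iff_isClosed]
    intro x p hx hxp
    choose a ha hax using hx
    obtain ⟨M, hM⟩ : BddAbove (Set.range fun k => ‖x k‖) :=
      (hxp.norm).bddAbove_range
    have hδn : (0 : ℝ) < δ ^ n := pow_pos hδpos n
    have haK : ∀ k, a k ∈ C ∩ Metric.closedBall 0 ((δ ^ n)⁻¹ * M) := by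
      intro k
      refine ⟨ha k, ?_⟩
      rw [Metric.mem_closedBall, dist_zero_right]
      have h1 := (hiter n (a k) (ha k)).2
      rw [hax k] at h1
      have h2 : ‖x k‖ ≤ M := hM ⟨k, rfl⟩
      exact (le_inv_mul_iff₀ hδn).mpr (h1.trans h2)
    have hKc : IsCompact (C ∩ Metric.closedBall 0 ((δ ^ n)⁻¹ * M)) :=
      (isCompact_closedBall 0 _).inter_left hCclosed
    obtain ⟨b, hbK, φ, hφ, hconv⟩ := hKc.tendsto_subseq haK
    refine ⟨b, hbK.1, ?_⟩
    have h1 : Filter.Tendsto (fun k => (u ^ n) (a (φ k))) Filter.atTop (nhds ((u ^ n) b)) :=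
      (hcont.tendsto b).comp hconv
    have h2 : Filter.Tendsto (fun k => (u ^ n) (a (φ k))) Filter.atTop (nhds p) := by
      simp only [hax]
      exact hxp.comp hφ.tendsto_atTop
    exact tendsto_nhds_unique h1 h2
  -- Step 4: the intersection is a cone.
  set A : Set E := ⋂ n : ℕ, (u ^ n) '' C with hAdef
  have hAcone : IsCone A := by
    refine ⟨isClosed_iInter hclosed, ?_, ?_, ?_⟩
    · exact Set.mem_iInter.mpr fun n => ⟨0, hC0, map_zero _⟩
    · intro x hx y hy
      rw [Set.mem_iInter] at hx hy ⊢
      intro n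
      obtain ⟨a, haC, rfl⟩ := hx n
      obtain ⟨b, hbC, rfl⟩ := hy n
      exact ⟨a + b, hCadd a haC b hbC, map_add _ _ _⟩
    · intro t ht x hx
      rw [Set.mem_iInter] at hx ⊢
      intro n
      obtain ⟨a, haC, rfl⟩ := hx n
      exact ⟨t • a, hCsmul t ht a haC, map_smul _ _ _⟩
  -- Step 5: the intersection contains a nonzero vector.
  have hAnonzero : ∃ x ∈ A, x ≠ 0 := by
    set K : ℕ → Set E := fun n => ((u ^ n) '' C) ∩ Metric.sphere 0 1 with hKdef
    have hKsub : ∀ n, K (n + 1) ⊆ K n := fun n =>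
      Set.inter_subset_inter_left _ (hmono n)
    have hKne : ∀ n, (K n).Nonempty := by
      intro n
      have hin : (u ^ n) x₀ ∈ C := (hiter n x₀ hx₀C).1
      have hne : (u ^ n) x₀ ≠ 0 := hne0 n x₀ hx₀C hx₀
      have hnorm : ‖(u ^ n) x₀‖ ≠ 0 := norm_ne_zero_iff.mpr hne
      refine ⟨‖(u ^ n) x₀‖⁻¹ • (u ^ n) x₀, ?_, ?_⟩
      · exact ⟨‖(u ^ n) x₀‖⁻¹ • x₀,
          hCsmul _ (by positivity) _ hx₀C, map_smul _ _ _⟩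
      · simp [norm_smul, inv_mul_cancel₀ hnorm]
    have hKclosed : ∀ n, IsClosed (K n) :=
      fun n => (hclosed n).inter (Metric.isClosed_sphere)
    have hK0 : IsCompact (K 0) := (isCompact_sphere 0 1).inter_left (hclosed 0)
    obtain ⟨x, hx⟩ := IsCompact.nonempty_iInter_of_sequence_nonempty_isCompact_isClosed
      K hKsub hKne hK0 hKclosed
    rw [Set.mem_iInter] at hx
    refine ⟨x, Set.mem_iInter.mpr fun n => (hx n).1, ?_⟩
    have : ‖x‖ = 1 := by simpa using (hx 0).2
    intro h; rw [h] at this; simp at this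
  refine ⟨hAcone, hAnonzero, ?_⟩
  -- Step 6: u(A) = A.
  apply Set.Subset.antisymm
  · rintro _ ⟨x, hx, rfl⟩
    rw [Set.mem_iInter] at hx ⊢
    intro n
    cases n with
    | zero =>
      have hxC : x ∈ C := by simpa using hx 0
      exact ⟨u x, huC x hxC, by simp⟩
    | succ n =>
      obtain ⟨a, haC, hax⟩ := hx n
      exact ⟨a, haC, by rw [pow_succ', Module.End.mul_apply, hax]⟩
  · intro x hx
    rcases eq_or_ne x 0 with rfl | hxne
    · exact ⟨0, Set.mem_iInter.mpr fun n => ⟨0, hC0, map_zero _⟩, map_zero u⟩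
    · rw [Set.mem_iInter] at hx
      set F : ℕ → Set E := fun n => ((u ^ n) '' C) ∩ {y | u y = x} with hFdef
      have hFsub : ∀ n, F (n + 1) ⊆ F n := fun n =>
        Set.inter_subset_inter_left _ (hmono n)
      have hFne : ∀ n, (F n).Nonempty := by
        intro n
        obtain ⟨a, haC, hax⟩ := hx (n + 1)
        refine ⟨(u ^ n) a, ⟨a, haC, rfl⟩, ?_⟩
        show u ((u ^ n) a) = x
        rw [← Module.End.mul_apply, ← pow_succ']
        exact hax
      have hFclosed : ∀ n, IsClosed (F n) := fun n =>
        (hclosed n).inter (isClosed_singleton.preimage hucont)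
      have hFbdd : ∀ n, ∀ y ∈ F n, ‖y‖ ≤ δ⁻¹ * ‖x‖ := by
        rintro n y ⟨hy, hyx⟩
        have hyC : y ∈ C := hsubC n hy
        have h1 := hδle y hyC
        rw [Set.mem_setOf_eq] at hyx
        rw [hyx] at h1
        exact (le_inv_mul_iff₀ hδpos).mpr h1
      have hF0 : IsCompact (F 0) := by
        apply Metric.isCompact_of_isClosed_isBounded (hFclosed 0)
        rw [Metric.isBounded_iff_subset_closedBall 0]
        exact ⟨δ⁻¹ * ‖x‖, fun y hy => by
          rw [Metric.mem_closedBall, dist_zero_right]; exact hFbdd 0 y hy⟩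
      obtain ⟨y, hy⟩ := IsCompact.nonempty_iInter_of_sequence_nonempty_isCompact_isClosed
        F hFsub hFne hF0 hFclosed
      rw [Set.mem_iInter] at hy
      exact ⟨y, Set.mem_iInter.mpr fun n => (hy n).1, (hy 0).2⟩
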